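/- Let G be a countable group, φ a minimal action of G on the line, and H a commensurated subgroup of G such that the restriction of φ to H has no global fixed point. Let ν be a nonzero Radon measure on ℝ (a regular Borel measure, finite on compact sets) that is invariant under φ(h) for every h ∈ H, and let τ : H → ℝ be a group homomorphism such that for every h ∈ H and every x ∈ ℝ: τ(h) = ν([x, φ(h)(x))) if φ(h)(x) ≥ x, and τ(h) = −ν([φ(h)(x), x)) if φ(h)(x) < x. Then: (1) there exists a group homomorphism κ : G → ℝ (with values in the positive multiplicative reals) such that τ(g h g⁻¹) = κ(g)·τ(h) for every g ∈ G and every h ∈ H ∩ g⁻¹Hg; and (2) the kernel of τ is a commensurated subgroup of G, and φ(h) is the identity of ℝ for every h in the kernel of τ. -/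

import Mathlib

open Topology Filter

/-!  `ℝ ≃o ℝ` is the group `Homeo₀(ℝ)` of orientation-preserving homeomorphisms of the
line (order isomorphisms of `ℝ`).  An action of a group `G` on the line is a group
homomorphism `G →* (ℝ ≃o ℝ)`. -/

/-- The underlying map of an action, as a point of the function space `G → ℝ → ℝ`
(equipped with the product topology of pointwise convergence and its Borel σ-algebra). -/
def actMap {G : Type*} [Group G] (φ : G →* (ℝ ≃o ℝ)) : G → ℝ → ℝ := fun g => ⇑(φ g)

/-- An action is minimal if every orbit is dense. -/
def IsMinimalAction {G : Type*} [Group G] (φ : G →* (ℝ ≃o ℝ)) : Prop :=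
  ∀ x : ℝ, Dense {y : ℝ | ∃ g : G, φ g x = y}

/-- Conjugation of (the underlying map of) an action by `f ∈ Homeo₀(ℝ)`. -/
def conjFun {G : Type*} (f : ℝ ≃o ℝ) (F : G → ℝ → ℝ) : G → ℝ → ℝ :=
  fun g x => f (F g (f.symm x))

/-- The space of minimal actions of `G` on the line, as a subset of the function
space `G → ℝ → ℝ`. -/
def RepMin (G : Type*) [Group G] : Set (G → ℝ → ℝ) :=
  {F | ∃ φ : G →* (ℝ ≃o ℝ), IsMinimalAction φ ∧ F = actMap φ}

/-- `G` belongs to the class `𝒞`: the conjugacy relation on `RepMin G` is smooth, i.e.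
there is a Borel map to `ℝ` whose fibers are exactly the conjugacy classes. -/
def ClassC (G : Type*) [Group G] : Prop :=
  ∃ r : (RepMin G) → ℝ, Measurable r ∧
    ∀ φ ψ : RepMin G, (r φ = r ψ ↔ ∃ f : ℝ ≃o ℝ, conjFun f (φ : G → ℝ → ℝ) = (ψ : G → ℝ → ℝ))

open MeasureTheory

/-- `H` is a commensurated subgroup of `G`: for every `g`, `H ∩ gHg⁻¹` has finite index
in both `H` and `gHg⁻¹`. -/
def Commensurated {G : Type*} [Group G] (H : Subgroup G) : Prop :=
  ∀ g : G, Subgroup.Commensurable H (Subgroup.map (MulAut.conj g).toMonoidHom H)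


section Helpers

variable {G : Type*} [Group G]

lemma mem_conjMap (H : Subgroup G) (w x : G) :
    x ∈ Subgroup.map (MulAut.conj w).toMonoidHom H ↔ w⁻¹ * x * w ∈ H := by
  constructor
  · rintro ⟨y, hy, rfl⟩
    have e : w⁻¹ * (MulEquiv.toMonoidHom (MulAut.conj w)) y * w = y := by
      simp [MulAut.conj_apply]; group
    rw [e]; exact hy
  · intro hx
    exact ⟨w⁻¹ * x * w, hx, by simp [MulAut.conj_apply]; group⟩

lemma addhom_one {A : Type*} [Group A] (t : A → ℝ)
    (ht : ∀ a b, t (a * b) = t a + t b) : t 1 = 0 := by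
  have := ht 1 1; simp at this; linarith

lemma addhom_inv {A : Type*} [Group A] (t : A → ℝ)
    (ht : ∀ a b, t (a * b) = t a + t b) (a : A) : t a⁻¹ = - t a := by
  have := ht a a⁻¹; simp [addhom_one t ht] at this; linarith

lemma addhom_pow {A : Type*} [Group A] (t : A → ℝ)
    (ht : ∀ a b, t (a * b) = t a + t b) (a : A) (n : ℕ) : t (a ^ n) = n * t a := by
  induction n with
  | zero => simpa using addhom_one t ht
  | succ n ih => rw [pow_succ, ht, ih]; push_cast; ring

lemma addhom_zpow {A : Type*} [Group A] (t : A → ℝ)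
    (ht : ∀ a b, t (a * b) = t a + t b) (a : A) (n : ℤ) : t (a ^ n) = n * t a := by
  cases n with
  | ofNat n => simpa using addhom_pow t ht a n
  | negSucc n =>
      rw [zpow_negSucc, addhom_inv t ht, addhom_pow t ht]
      push_cast; ring

lemma cut_lemma {a b a' b' : ℝ} (hb : 0 < b) (hb' : 0 < b')
    (hsign : ∀ p q : ℤ, ((p : ℝ) * b < (q : ℝ) * a ↔ (p : ℝ) * b' < (q : ℝ) * a')) :
    a' = (b' / b) * a := by
  have hrat : ∀ r : ℚ, ((r : ℝ) < a / b ↔ (r : ℝ) < a' / b') := by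
    intro r
    have hden : (0 : ℝ) < (r.den : ℝ) := by exact_mod_cast r.pos
    have hnum : ((r.num : ℝ)) = (r : ℝ) * (r.den : ℝ) := by
      rw [Rat.cast_def]; field_simp
    have e1 : ((r : ℝ) < a / b) ↔ ((r.num : ℝ) * b < (r.den : ℝ) * a) := by
      rw [lt_div_iff₀ hb]
      constructor
      · intro h
        calc (r.num : ℝ) * b = (r.den : ℝ) * ((r:ℝ) * b) := by rw [hnum]; ring
        _ < (r.den : ℝ) * a := by exact (mul_lt_mul_iff_right₀ hden).mpr h
      · intro h
        have : (r.den : ℝ) * ((r:ℝ) * b) < (r.den : ℝ) * a := by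
          calc (r.den : ℝ) * ((r:ℝ) * b) = (r.num : ℝ) * b := by rw [hnum]; ring
          _ < (r.den : ℝ) * a := h
        exact (mul_lt_mul_iff_right₀ hden).mp this
    have e2 : ((r : ℝ) < a' / b') ↔ ((r.num : ℝ) * b' < (r.den : ℝ) * a') := by
      rw [lt_div_iff₀ hb']
      constructor
      · intro h
        calc (r.num : ℝ) * b' = (r.den : ℝ) * ((r:ℝ) * b') := by rw [hnum]; ring
        _ < (r.den : ℝ) * a' := by exact (mul_lt_mul_iff_right₀ hden).mpr h
      · intro h
        have : (r.den : ℝ) * ((r:ℝ) * b') < (r.den : ℝ) * a' := by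
          calc (r.den : ℝ) * ((r:ℝ) * b') = (r.num : ℝ) * b' := by rw [hnum]; ring
          _ < (r.den : ℝ) * a' := h
        exact (mul_lt_mul_iff_right₀ hden).mp this
    rw [e1, e2]
    have := hsign r.num (r.den : ℤ)
    simpa using this
  have hdiv : a / b = a' / b' := by
    by_contra hne
    rcases Ne.lt_or_gt hne with hlt | hlt
    · obtain ⟨r, hr1, hr2⟩ := exists_rat_btwn hlt
      exact absurd ((hrat r).mpr hr2) (not_lt.mpr hr1.le)
    · obtain ⟨r, hr1, hr2⟩ := exists_rat_btwn hlt
      exact absurd ((hrat r).mp hr2) (not_lt.mpr hr1.le)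
  have : a' = (a / b) * b' := by rw [hdiv]; field_simp
  rw [this]; field_simp

lemma iter_unbounded (f : ℝ ≃o ℝ) (hf : ∀ x, x < f x) (a b : ℝ) :
    ∃ n : ℕ, b ≤ f^[n] a := by
  by_contra hc
  push_neg at hc
  set S : Set ℝ := Set.range (fun n => f^[n] a) with hS
  have hne : S.Nonempty := ⟨a, 0, rfl⟩
  have hbdd : BddAbove S := ⟨b, by rintro x ⟨n, rfl⟩; exact (hc n).le⟩
  set c := sSup S with hc'
  have h1 : f.symm c < c := by
    have := hf (f.symm c); rwa [f.apply_symm_apply] at this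
  obtain ⟨x, ⟨n, rfl⟩, hx⟩ := exists_lt_of_lt_csSup hne h1
  have h2 : c < f (f^[n] a) := by
    have := f.lt_iff_lt.mpr hx
    rwa [f.apply_symm_apply] at this
  have h3 : f (f^[n] a) ≤ c := by
    apply le_csSup hbdd
    exact ⟨n + 1, Function.iterate_succ_apply' (⇑f) n a⟩
  exact absurd (h2.trans_le h3) (lt_irrefl c)

lemma orderIso_trichotomy (f : ℝ ≃o ℝ) :
    (∃ x, f x = x) ∨ (∀ x, x < f x) ∨ (∀ x, f x < x) := by
  by_contra hc
  push_neg at hc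
  obtain ⟨h1, h2, h3⟩ := hc
  obtain ⟨b, hb⟩ := h2
  obtain ⟨a, ha⟩ := h3
  have hb' : f b < b := lt_of_le_of_ne hb (h1 b)
  have ha' : a < f a := lt_of_le_of_ne ha (fun e => h1 a e.symm)
  have hcont : Continuous fun x => f x - x :=
    (OrderIso.continuous f).sub continuous_id
  have h0 : (0:ℝ) ∈ Set.uIcc (f a - a) (f b - b) :=
    Set.mem_uIcc.mpr (Or.inr ⟨by linarith, by linarith⟩)
  obtain ⟨x, _, hx⟩ := intermediate_value_uIcc (f := fun x => f x - x)
    (hcont.continuousOn) h0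
  have hx' : f x - x = 0 := hx
  exact h1 x (by linarith)

lemma orderIso_fix_of_pow_fix (f : ℝ ≃o ℝ) {n : ℕ} (hn : 0 < n) {z : ℝ}
    (hz : (f ^ n) z = z) : f z = z := by
  have key : ∀ (g : ℝ ≃o ℝ) (m : ℕ), z < g z → z < (g ^ (m + 1)) z := by
    intro g m hg
    induction m with
    | zero => simpa using hg
    | succ m ih =>
        have : (g ^ (m + 1 + 1)) z = g ((g ^ (m + 1)) z) := by
          rw [pow_succ']; rfl
        rw [this]
        exact hg.trans_le (g.le_iff_le.mpr ih.le)
  rcases lt_trichotomy (f z) z with hlt | heq | hgt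
  · -- z < f⁻¹ z
    have hinv : z < f⁻¹ z := by
      have := f.symm.lt_iff_lt.mpr hlt
      exact (by simpa [f.symm_apply_apply] using this : z < f.symm z)
    have hz' : ((f⁻¹) ^ n) z = z := by
      have : ((f ^ n)⁻¹) ((f ^ n) z) = ((f ^ n)⁻¹) z := by rw [hz]
      simpa [inv_pow] using this.symm.trans (by
        show ((f ^ n)⁻¹) ((f ^ n) z) = z
        exact (f ^ n).symm_apply_apply z)
    obtain ⟨m, rfl⟩ := Nat.exists_eq_succ_of_ne_zero hn.ne'
    have := key f⁻¹ m hinv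
    rw [hz'] at this
    exact absurd this (lt_irrefl z)
  · exact heq
  · obtain ⟨m, rfl⟩ := Nat.exists_eq_succ_of_ne_zero hn.ne'
    have := key f m hgt
    rw [hz] at this
    exact absurd this (lt_irrefl z)

lemma nu_univ_zero (ν : Measure ℝ) (hall : ∀ a b : ℝ, ν (Set.Ico a b) = 0) : ν = 0 := by
  have hcov : (Set.univ : Set ℝ) = ⋃ n : ℕ, Set.Ico (-(n:ℝ)) n := by
    ext x
    simp only [Set.mem_univ, Set.mem_iUnion, Set.mem_Ico, true_iff]
    obtain ⟨n, hn⟩ := exists_nat_gt |x|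
    exact ⟨n, by have := neg_abs_le x; have := le_abs_self x; constructor <;> linarith⟩
  have : ν Set.univ = 0 := by
    rw [hcov]
    exact measure_iUnion_null fun n => hall _ _
  exact Measure.measure_univ_eq_zero.mp this

lemma nu_zero_of_all (ν : Measure ℝ) (f : ℝ ≃o ℝ) (hup : ∀ x, x < f x)
    (h0 : ∀ x, ν (Set.Ico x (f x)) = 0) : ν = 0 := by
  apply nu_univ_zero
  intro a b
  have hmono : ∀ n : ℕ, a ≤ f^[n] a := by
    intro n
    induction n with
    | zero => simp
    | succ n ih =>
        rw [Function.iterate_succ_apply']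
        exact ih.trans (hup _).le
  have hiter : ∀ n : ℕ, ν (Set.Ico a (f^[n] a)) = 0 := by
    intro n
    induction n with
    | zero => simp
    | succ n ih =>
        rw [Function.iterate_succ_apply']
        have hsplit : Set.Ico a (f^[n] a) ∪ Set.Ico (f^[n] a) (f (f^[n] a))
            = Set.Ico a (f (f^[n] a)) :=
          Set.Ico_union_Ico_eq_Ico (hmono n) (hup _).le
        rw [← hsplit]
        refine le_antisymm ?_ zero_le
        calc ν _ ≤ ν (Set.Ico a (f^[n] a)) + ν (Set.Ico (f^[n] a) (f (f^[n] a))) :=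
              measure_union_le _ _
        _ = 0 := by rw [ih, h0]; simp
  obtain ⟨n, hn⟩ := iter_unbounded f hup a b
  refine le_antisymm ?_ zero_le
  calc ν (Set.Ico a b) ≤ ν (Set.Ico a (f^[n] a)) :=
        measure_mono (Set.Ico_subset_Ico_right hn)
  _ = 0 := hiter n

end Helpers

theorem stmt5 (G : Type*) [Group G] [Countable G]
    (φ : G →* (ℝ ≃o ℝ)) (hφ : IsMinimalAction φ)
    (H : Subgroup G) (hH : Commensurated H)
    (hirr : ¬ ∃ x : ℝ, ∀ h ∈ H, φ h x = x)
    (ν : Measure ℝ) (hreg : ν.Regular) (hν : ν ≠ 0)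
    (hinv : ∀ h ∈ H, Measure.map (⇑(φ h)) ν = ν)
    (τ : ↥H → ℝ)
    (hτhom : ∀ h h' : ↥H, τ (h * h') = τ h + τ h')
    (hτν : ∀ (h : ↥H) (x : ℝ),
      (x ≤ φ (h : G) x → τ h = (ν (Set.Ico x (φ (h : G) x))).toReal) ∧
      (φ (h : G) x < x → τ h = -(ν (Set.Ico (φ (h : G) x) x)).toReal)) :
    (∃ κ : G → ℝ, (∀ g : G, 0 < κ g) ∧ (∀ g g' : G, κ (g * g') = κ g * κ g') ∧
      ∀ (g : G) (h : G) (hh : h ∈ H) (hgh : g * h * g⁻¹ ∈ H),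
        τ ⟨g * h * g⁻¹, hgh⟩ = κ g * τ ⟨h, hh⟩)
    ∧
    (∃ K : Subgroup G,
      (∀ k : G, k ∈ K ↔ ∃ hk : k ∈ H, τ ⟨k, hk⟩ = 0) ∧
      Commensurated K ∧
      ∀ k ∈ K, ∀ y : ℝ, φ k y = y) := by
  haveI := hreg
  have hfin : ∀ a b : ℝ, ν (Set.Ico a b) ≠ ⊤ := fun a b =>
    ((measure_mono Set.Ico_subset_Icc_self).trans_lt isCompact_Icc.measure_lt_top).ne
  have tau1 : τ 1 = 0 := addhom_one τ hτhom
  have phi_inv : ∀ (g : G) (x : ℝ), φ g⁻¹ x = (φ g).symm x := fun g x => by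
    rw [map_inv]; rfl
  -- sign lemmas
  have tau_pos : ∀ h : ↥H, (∀ x, x < φ (h : G) x) → 0 < τ h := by
    intro h hup
    have heq : ∀ x : ℝ, τ h = (ν (Set.Ico x (φ (h : G) x))).toReal := fun x =>
      (hτν h x).1 (hup x).le
    have hge : 0 ≤ τ h := (heq 0) ▸ ENNReal.toReal_nonneg
    rcases hge.lt_or_eq with hlt | heq0
    · exact hlt
    · exfalso
      apply hν
      apply nu_zero_of_all ν (φ (h : G)) hup
      intro x
      have h1 : (ν (Set.Ico x (φ (h : G) x))).toReal = 0 := by rw [← heq x, ← heq0]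
      rcases (ENNReal.toReal_eq_zero_iff _).mp h1 with h2 | h2
      · exact h2
      · exact absurd h2 (hfin _ _)
  have tau_fix : ∀ h : ↥H, (∃ x, φ (h : G) x = x) → τ h = 0 := by
    rintro h ⟨x, hx⟩
    have := (hτν h x).1 (le_of_eq hx.symm)
    rw [hx] at this
    simpa using this
  have tau_neg : ∀ h : ↥H, (∀ x, φ (h : G) x < x) → τ h < 0 := by
    intro h hdn
    have h1 : ∀ x, x < φ ((h⁻¹ : ↥H) : G) x := by
      intro x
      have hc : ((h⁻¹ : ↥H) : G) = ((h : G))⁻¹ := rfl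
      rw [hc, phi_inv]
      have := hdn ((φ (h : G)).symm x)
      rwa [OrderIso.apply_symm_apply] at this
    have h2 := tau_pos h⁻¹ h1
    have h3 : τ h⁻¹ = - τ h := addhom_inv τ hτhom h
    linarith
  have tau_pos_iff : ∀ h : ↥H, 0 < τ h ↔ ∀ x, x < φ (h : G) x := by
    intro h
    constructor
    · intro hp
      rcases orderIso_trichotomy (φ (h : G)) with hfix | hup | hdn
      · exact absurd (tau_fix h hfix) (by intro e; rw [e] at hp; exact lt_irrefl 0 hp)
      · exact hup
      · exact absurd hp (by have := tau_neg h hdn; linarith)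
    · exact tau_pos h
  -- no global fixed point for finite-index subgroups of H
  have no_fix_L : ∀ L : Subgroup G, L ≤ H → L.relIndex H ≠ 0 →
      ∀ p : ℝ, ¬ (∀ l ∈ L, φ l p = p) := by
    intro L hLH hrel p hp
    have hidx : (L.subgroupOf H).index ≠ 0 := hrel
    haveI hfinQ : Finite (↥H ⧸ L.subgroupOf H) := (Nat.card_ne_zero.mp hidx).2
    haveI hneQ : Nonempty (↥H ⧸ L.subgroupOf H) := (Nat.card_ne_zero.mp hidx).1
    have hwd : ∀ a b : ↥H, (QuotientGroup.leftRel (L.subgroupOf H)) a b →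
        φ (a : G) p = φ (b : G) p := by
      intro a b hab
      rw [QuotientGroup.leftRel_apply] at hab
      have hmem : ((a : G))⁻¹ * (b : G) ∈ L := Subgroup.mem_subgroupOf.mp hab
      have e2 : (a : G) * (((a : G))⁻¹ * (b : G)) = (b : G) := by group
      calc φ (a : G) p = φ (a : G) (φ (((a:G))⁻¹ * (b:G)) p) := by rw [hp _ hmem]
      _ = φ ((a:G) * (((a:G))⁻¹ * (b:G))) p := by
          rw [map_mul φ ((a:G)) (((a:G))⁻¹ * (b:G))]
          rfl
      _ = φ (b : G) p := by rw [e2]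
    let F : (↥H ⧸ L.subgroupOf H) → ℝ := Quotient.lift (fun h : ↥H => φ (h : G) p) hwd
    obtain ⟨c₀, hc₀⟩ := Finite.exists_max F
    obtain ⟨A, rfl⟩ := Quotient.exists_rep c₀
    have hstep : ∀ h : ↥H, φ (h : G) (φ (A : G) p) ≤ φ (A : G) p := by
      intro h
      have e : φ (h : G) (φ (A : G) p) = F ⟦h * A⟧ := by
        show φ (h : G) (φ (A : G) p) = φ ((h * A : ↥H) : G) p
        rw [Subgroup.coe_mul, map_mul]
        rfl
      rw [e]
      exact hc₀ ⟦h * A⟧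
    apply hirr
    refine ⟨φ (A : G) p, fun g hg => ?_⟩
    have h1 := hstep ⟨g, hg⟩
    have h2 := hstep ⟨g, hg⟩⁻¹
    have h3 : φ (A : G) p ≤ φ g (φ (A : G) p) := by
      have hcoe : ((⟨g, hg⟩⁻¹ : ↥H) : G) = g⁻¹ := rfl
      rw [hcoe, phi_inv] at h2
      exact (OrderIso.symm_apply_le _).mp h2
    exact le_antisymm h1 h3
  -- existence of elements with nonzero τ in finite-index subgroups
  have exists_tau : ∀ L : Subgroup G, L ≤ H → L.relIndex H ≠ 0 →
      ∃ h : ↥H, (h : G) ∈ L ∧ τ h ≠ 0 := by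
    intro L hLH hrel
    by_contra hc
    push_neg at hc
    have key : ∀ l : G, l ∈ L → ν (Set.Ico (φ l 0) 0) = 0 ∧ ν (Set.Ico 0 (φ l 0)) = 0 := by
      intro l hl
      have hlH : l ∈ H := hLH hl
      have hτ0 : τ ⟨l, hlH⟩ = 0 := hc ⟨l, hlH⟩ hl
      rcases le_or_gt 0 (φ l 0) with hle | hlt
      · constructor
        · rw [Set.Ico_eq_empty (not_lt.mpr hle)]; exact measure_empty
        · have h5 := (hτν ⟨l, hlH⟩ 0).1 hle
          rw [hτ0] at h5
          rcases (ENNReal.toReal_eq_zero_iff _).mp h5.symm with h6 | h6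
          · exact h6
          · exact absurd h6 (hfin _ _)
      · constructor
        · have h5 := (hτν ⟨l, hlH⟩ 0).2 hlt
          rw [hτ0] at h5
          have h5' : (ν (Set.Ico (φ l 0) 0)).toReal = 0 := by linarith
          rcases (ENNReal.toReal_eq_zero_iff _).mp h5' with h6 | h6
          · exact h6
          · exact absurd h6 (hfin _ _)
        · rw [Set.Ico_eq_empty (not_lt.mpr hlt.le)]; exact measure_empty
    have hub : ∀ b : ℝ, ∃ l, l ∈ L ∧ b < φ l 0 := by
      intro b
      by_contra hcb
      push_neg at hcb
      set S := {y : ℝ | ∃ l, l ∈ L ∧ φ l 0 = y} with hS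
      have hSne : S.Nonempty := ⟨0, 1, one_mem L, by rw [map_one]; rfl⟩
      have hSb : BddAbove S := ⟨b, by rintro y ⟨l, hl, rfl⟩; exact hcb l hl⟩
      apply no_fix_L L hLH hrel (sSup S)
      have hle : ∀ l ∈ L, φ l (sSup S) ≤ sSup S := by
        intro l hl
        by_contra hgt
        push_neg at hgt
        have h1 : (φ l).symm (sSup S) < sSup S := by
          have := (φ l).symm.strictMono hgt
          rwa [OrderIso.symm_apply_apply] at this
        obtain ⟨y, ⟨m, hm, rfl⟩, hy⟩ := exists_lt_of_lt_csSup hSne h1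
        have h2 : sSup S < φ l (φ m 0) := by
          have := (φ l).strictMono hy
          rwa [OrderIso.apply_symm_apply] at this
        have hmem : φ l (φ m 0) ∈ S := ⟨l * m, mul_mem hl hm, by rw [map_mul]; rfl⟩
        exact absurd (le_csSup hSb hmem) (not_le.mpr h2)
      intro l hl
      refine le_antisymm (hle l hl) ?_
      have := hle l⁻¹ (inv_mem hl)
      rw [phi_inv] at this
      exact (OrderIso.symm_apply_le _).mp this
    have hlb : ∀ b : ℝ, ∃ l, l ∈ L ∧ φ l 0 < b := by
      intro b
      by_contra hcb
      push_neg at hcb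
      set S := {y : ℝ | ∃ l, l ∈ L ∧ φ l 0 = y} with hS
      have hSne : S.Nonempty := ⟨0, 1, one_mem L, by rw [map_one]; rfl⟩
      have hSb : BddBelow S := ⟨b, by rintro y ⟨l, hl, rfl⟩; exact hcb l hl⟩
      apply no_fix_L L hLH hrel (sInf S)
      have hge : ∀ l ∈ L, sInf S ≤ φ l (sInf S) := by
        intro l hl
        by_contra hgt
        push_neg at hgt
        have h1 : sInf S < (φ l).symm (sInf S) := by
          have := (φ l).symm.strictMono hgt
          rwa [OrderIso.symm_apply_apply] at this
        obtain ⟨y, ⟨m, hm, rfl⟩, hy⟩ := exists_lt_of_csInf_lt hSne h1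
        have h2 : φ l (φ m 0) < sInf S := by
          have := (φ l).strictMono hy
          rwa [OrderIso.apply_symm_apply] at this
        have hmem : φ l (φ m 0) ∈ S := ⟨l * m, mul_mem hl hm, by rw [map_mul]; rfl⟩
        exact absurd (csInf_le hSb hmem) (not_le.mpr h2)
      intro l hl
      refine le_antisymm ?_ (hge l hl)
      have := hge l⁻¹ (inv_mem hl)
      rw [phi_inv] at this
      exact (OrderIso.le_symm_apply _).mp this
    apply hν
    apply nu_univ_zero
    intro u v
    obtain ⟨l, hl, hlo⟩ := hlb u
    obtain ⟨m, hm, hhi⟩ := hub v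
    have h1 : Set.Ico u v ⊆ Set.Ico (φ l 0) 0 ∪ Set.Ico 0 (φ m 0) := by
      intro t ht
      rcases lt_or_ge t 0 with h | h
      · exact Or.inl ⟨hlo.le.trans ht.1, h⟩
      · exact Or.inr ⟨h, ht.2.trans hhi⟩
    refine le_antisymm ?_ zero_le
    calc ν (Set.Ico u v) ≤ ν (Set.Ico (φ l 0) 0 ∪ Set.Ico 0 (φ m 0)) := measure_mono h1
    _ ≤ ν (Set.Ico (φ l 0) 0) + ν (Set.Ico 0 (φ m 0)) := measure_union_le _ _
    _ = 0 := by rw [(key l hl).1, (key m hm).2]; simp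
  -- conjugation transfer of the "moves up everywhere" property
  have conj_up : ∀ g x : G, (∀ y, y < φ (g * x * g⁻¹) y) ↔ (∀ y, y < φ x y) := by
    intro g x
    have e : ∀ y : ℝ, φ (g * x * g⁻¹) y = φ g (φ x ((φ g).symm y)) := by
      intro y
      rw [map_mul, map_mul, ← phi_inv]
      rfl
    constructor
    · intro hcj y
      have h1 := hcj (φ g y)
      rw [e, OrderIso.symm_apply_apply] at h1
      exact (φ g).lt_iff_lt.mp h1
    · intro hx y
      rw [e]
      have h1 : (φ g).symm y < φ x ((φ g).symm y) := hx _
      have h2 := (φ g).strictMono h1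
      rw [OrderIso.apply_symm_apply] at h2
      exact h2
  -- the key proportionality statement
  have exists_kappa : ∀ g : G, ∃ c : ℝ, 0 < c ∧ ∀ (h : G) (hh : h ∈ H) (hgh : g * h * g⁻¹ ∈ H),
      τ ⟨g * h * g⁻¹, hgh⟩ = c * τ ⟨h, hh⟩ := by
    intro g
    set A := Subgroup.map (MulAut.conj g⁻¹).toMonoidHom H with hA
    have hmemA : ∀ x : G, x ∈ A ↔ g * x * g⁻¹ ∈ H := by
      intro x
      rw [hA, mem_conjMap, inv_inv]
    have hrel : (H ⊓ A).relIndex H ≠ 0 := by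
      rw [Subgroup.inf_relIndex_left]
      exact (hH g⁻¹).2
    obtain ⟨h₀, h₀L, h₀ne⟩ := exists_tau (H ⊓ A) inf_le_left hrel
    have memH : ∀ l : ↥(H ⊓ A), (l : G) ∈ H := fun l => (Subgroup.mem_inf.mp l.2).1
    have memC : ∀ l : ↥(H ⊓ A), g * (l : G) * g⁻¹ ∈ H := fun l =>
      (hmemA (l : G)).mp (Subgroup.mem_inf.mp l.2).2
    set τL : ↥(H ⊓ A) → ℝ := fun l => τ ⟨(l : G), memH l⟩ with hτL
    set σL : ↥(H ⊓ A) → ℝ := fun l => τ ⟨g * (l : G) * g⁻¹, memC l⟩ with hσL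
    have hτLhom : ∀ a b : ↥(H ⊓ A), τL (a * b) = τL a + τL b := by
      intro a b
      have e : (⟨((a * b : ↥(H ⊓ A)) : G), memH (a * b)⟩ : ↥H)
          = ⟨(a : G), memH a⟩ * ⟨(b : G), memH b⟩ := by
        apply Subtype.ext
        rfl
      simp only [hτL]
      rw [e, hτhom]
    have hσLhom : ∀ a b : ↥(H ⊓ A), σL (a * b) = σL a + σL b := by
      intro a b
      have e : (⟨g * ((a * b : ↥(H ⊓ A)) : G) * g⁻¹, memC (a * b)⟩ : ↥H)
          = ⟨g * (a : G) * g⁻¹, memC a⟩ * ⟨g * (b : G) * g⁻¹, memC b⟩ := by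
        apply Subtype.ext
        show g * ((a : G) * (b : G)) * g⁻¹ = (g * (a : G) * g⁻¹) * (g * (b : G) * g⁻¹)
        group
      simp only [hσL]
      rw [e, hτhom]
    have hsign0 : ∀ l : ↥(H ⊓ A), (0 < σL l ↔ 0 < τL l) := by
      intro l
      simp only [hσL, hτL]
      rw [tau_pos_iff, tau_pos_iff]
      exact conj_up g (l : G)
    have hbase : ∃ l₀ : ↥(H ⊓ A), 0 < τL l₀ := by
      have hτLh₀ : τL ⟨(h₀ : G), h₀L⟩ = τ h₀ := rfl
      rcases h₀ne.lt_or_gt with hneg | hpos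
      · refine ⟨(⟨(h₀ : G), h₀L⟩ : ↥(H ⊓ A))⁻¹, ?_⟩
        rw [addhom_inv τL hτLhom, hτLh₀]
        linarith
      · exact ⟨⟨(h₀ : G), h₀L⟩, by rw [hτLh₀]; exact hpos⟩
    obtain ⟨l₀, hl₀⟩ := hbase
    have hσl₀ : 0 < σL l₀ := (hsign0 l₀).mpr hl₀
    refine ⟨σL l₀ / τL l₀, div_pos hσl₀ hl₀, ?_⟩
    intro h hh hgh
    set lh : ↥(H ⊓ A) := ⟨h, Subgroup.mem_inf.mpr ⟨hh, (hmemA h).mpr hgh⟩⟩ with hlh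
    have hsign : ∀ p q : ℤ, ((p : ℝ) * τL l₀ < (q : ℝ) * τL lh
        ↔ (p : ℝ) * σL l₀ < (q : ℝ) * σL lh) := by
      intro p q
      set e : ↥(H ⊓ A) := lh ^ q * l₀ ^ (-p) with he
      have hτe : τL e = q * τL lh - p * τL l₀ := by
        rw [he, hτLhom, addhom_zpow τL hτLhom, addhom_zpow τL hτLhom]
        push_cast
        ring
      have hσe : σL e = q * σL lh - p * σL l₀ := by
        rw [he, hσLhom, addhom_zpow σL hσLhom, addhom_zpow σL hσLhom]
        push_cast
        ring
      constructor
      · intro hlt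
        have h1 : 0 < τL e := by rw [hτe]; linarith
        have h2 := (hsign0 e).mpr h1
        rw [hσe] at h2
        linarith
      · intro hlt
        have h1 : 0 < σL e := by rw [hσe]; linarith
        have h2 := (hsign0 e).mp h1
        rw [hτe] at h2
        linarith
    have hcut := cut_lemma hl₀ hσl₀ hsign
    have e1 : τ ⟨g * h * g⁻¹, hgh⟩ = σL lh := rfl
    have e2 : τ ⟨h, hh⟩ = τL lh := rfl
    rw [e1, e2, hcut]
  choose κ hκpos hκ using exists_kappa
  -- multiplicativity of κ
  have hmul : ∀ g g' : G, κ (g * g') = κ g * κ g' := by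
    intro g g'
    set L₁ := H ⊓ Subgroup.map (MulAut.conj g'⁻¹).toMonoidHom H with hL₁
    set L₂ := H ⊓ Subgroup.map (MulAut.conj (g * g')⁻¹).toMonoidHom H with hL₂
    have hrel : (L₁ ⊓ L₂).relIndex H ≠ 0 := by
      apply Subgroup.relIndex_inf_ne_zero
      · rw [hL₁, Subgroup.inf_relIndex_left]; exact (hH g'⁻¹).2
      · rw [hL₂, Subgroup.inf_relIndex_left]; exact (hH (g * g')⁻¹).2
    obtain ⟨h₀, h₀M, h₀ne⟩ := exists_tau (L₁ ⊓ L₂) (inf_le_left.trans inf_le_left) hrel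
    have hh : (h₀ : G) ∈ H := h₀.2
    have h1 : g' * (h₀ : G) * g'⁻¹ ∈ H := by
      have m1 := (Subgroup.mem_inf.mp h₀M).1
      have m2 := (Subgroup.mem_inf.mp m1).2
      rw [mem_conjMap, inv_inv] at m2
      exact m2
    have h2 : (g * g') * (h₀ : G) * (g * g')⁻¹ ∈ H := by
      have m1 := (Subgroup.mem_inf.mp h₀M).2
      have m2 := (Subgroup.mem_inf.mp m1).2
      rw [mem_conjMap, inv_inv] at m2
      exact m2
    have h3 : g * (g' * (h₀ : G) * g'⁻¹) * g⁻¹ ∈ H := by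
      have e : g * (g' * (h₀ : G) * g'⁻¹) * g⁻¹ = (g * g') * (h₀ : G) * (g * g')⁻¹ := by group
      rw [e]
      exact h2
    have e1 := hκ (g * g') (h₀ : G) hh h2
    have e2 := hκ g (g' * (h₀ : G) * g'⁻¹) h1 h3
    have e3 := hκ g' (h₀ : G) hh h1
    have e4 : τ ⟨(g * g') * (h₀ : G) * (g * g')⁻¹, h2⟩
        = τ (⟨g * (g' * (h₀ : G) * g'⁻¹) * g⁻¹, h3⟩ : ↥H) := by
      congr 1
      exact Subtype.ext (by group)
    have hτh : τ (⟨(h₀ : G), hh⟩ : ↥H) ≠ 0 := by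
      have e : (⟨(h₀ : G), hh⟩ : ↥H) = h₀ := Subtype.ext rfl
      rw [e]
      exact h₀ne
    have key : κ (g * g') * τ ⟨(h₀ : G), hh⟩ = (κ g * κ g') * τ ⟨(h₀ : G), hh⟩ := by
      calc κ (g * g') * τ ⟨(h₀ : G), hh⟩ = τ ⟨(g * g') * (h₀ : G) * (g * g')⁻¹, h2⟩ := e1.symm
      _ = τ ⟨g * (g' * (h₀ : G) * g'⁻¹) * g⁻¹, h3⟩ := e4
      _ = κ g * τ ⟨g' * (h₀ : G) * g'⁻¹, h1⟩ := e2
      _ = κ g * (κ g' * τ ⟨(h₀ : G), hh⟩) := by rw [e3]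
      _ = (κ g * κ g') * τ ⟨(h₀ : G), hh⟩ := by ring
    exact mul_right_cancel₀ hτh key
  -- the kernel subgroup
  set Kc : Subgroup G :=
    { carrier := {k : G | ∃ hk : k ∈ H, τ ⟨k, hk⟩ = 0}
      one_mem' := ⟨H.one_mem, tau1⟩
      mul_mem' := by
        rintro a b ⟨ha, ha0⟩ ⟨hb, hb0⟩
        refine ⟨mul_mem ha hb, ?_⟩
        show τ ((⟨a, ha⟩ : ↥H) * ⟨b, hb⟩) = 0
        rw [hτhom, ha0, hb0]
        ring
      inv_mem' := by
        rintro a ⟨ha, ha0⟩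
        refine ⟨inv_mem ha, ?_⟩
        show τ ((⟨a, ha⟩ : ↥H)⁻¹) = 0
        rw [addhom_inv τ hτhom, ha0]
        ring } with hKc
  have hKmem : ∀ k : G, k ∈ Kc ↔ ∃ hk : k ∈ H, τ ⟨k, hk⟩ = 0 := fun k => Iff.rfl
  have hKH : Kc ≤ H := by
    intro k hk
    exact hk.choose
  have hconjK : ∀ w k : G, k ∈ Kc → w * k * w⁻¹ ∈ H → w * k * w⁻¹ ∈ Kc := by
    intro w k hk hwk
    obtain ⟨hkH, hk0⟩ := hk
    refine ⟨hwk, ?_⟩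
    rw [hκ w k hkH hwk, hk0, mul_zero]
  have comp2 : ∀ w : G, (Subgroup.map (MulAut.conj w).toMonoidHom Kc).relIndex Kc ≠ 0 := by
    intro w
    have h1 : (Subgroup.map (MulAut.conj w).toMonoidHom H).relIndex Kc ≠ 0 := by
      intro h0
      exact (hH w).2 (Subgroup.relIndex_eq_zero_of_le_right hKH h0)
    have h2 : Subgroup.map (MulAut.conj w).toMonoidHom H ⊓ Kc
        ≤ Subgroup.map (MulAut.conj w).toMonoidHom Kc := by
      intro x hx
      have hxH := (Subgroup.mem_inf.mp hx).1
      have hxK := (Subgroup.mem_inf.mp hx).2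
      rw [mem_conjMap] at hxH
      have h3 := hconjK w⁻¹ x hxK (by rwa [inv_inv])
      rw [inv_inv] at h3
      exact (mem_conjMap Kc w x).mpr h3
    have hdvd := Subgroup.relIndex_dvd_of_le_left Kc h2
    have h3 : (Subgroup.map (MulAut.conj w).toMonoidHom H ⊓ Kc).relIndex Kc ≠ 0 := by
      rw [Subgroup.inf_relIndex_right]
      exact h1
    exact ne_zero_of_dvd_ne_zero h3 hdvd
  have comp1 : ∀ w : G, Kc.relIndex (Subgroup.map (MulAut.conj w).toMonoidHom Kc) ≠ 0 := by
    intro w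
    have e : Subgroup.comap (MulAut.conj w).toMonoidHom Kc
        = Subgroup.map (MulAut.conj w⁻¹).toMonoidHom Kc := by
      ext x
      rw [Subgroup.mem_comap, mem_conjMap, inv_inv]
      simp [MulAut.conj_apply]
    have h4 := Subgroup.relIndex_comap (H := Kc) (MulAut.conj w).toMonoidHom Kc
    rw [e] at h4
    rw [← h4]
    exact comp2 w⁻¹
  have hcommK : Commensurated Kc := fun w => ⟨comp1 w, comp2 w⟩
  -- null sets of non-fixed points
  have M1 : ∀ h : ↥H, τ h = 0 → ν {y | y < φ (h : G) y} = 0 := by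
    intro h h0
    have hsub : {y | y < φ (h : G) y}
        ⊆ ⋃ r : ℚ, Set.Ico ((φ (h : G)).symm (r : ℝ)) (r : ℝ) := by
      intro y hy
      obtain ⟨r, hr1, hr2⟩ := exists_rat_btwn (show y < φ (h : G) y from hy)
      refine Set.mem_iUnion.mpr ⟨r, ?_, hr1⟩
      have := (φ (h : G)).symm.strictMono hr2
      rw [OrderIso.symm_apply_apply] at this
      exact this.le
    have hz : ∀ r : ℚ, ν (Set.Ico ((φ (h : G)).symm (r : ℝ)) (r : ℝ)) = 0 := by
      intro r
      rcases le_or_gt (r : ℝ) ((φ (h : G)).symm (r : ℝ)) with hle | hlt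
      · rw [Set.Ico_eq_empty (not_lt.mpr hle)]
        exact measure_empty
      · have hle2 : (φ (h : G)).symm (r : ℝ) ≤ φ (h : G) ((φ (h : G)).symm (r : ℝ)) := by
          rw [OrderIso.apply_symm_apply]
          exact hlt.le
        have h5 := (hτν h ((φ (h : G)).symm (r : ℝ))).1 hle2
        rw [h0, OrderIso.apply_symm_apply] at h5
        rcases (ENNReal.toReal_eq_zero_iff _).mp h5.symm with h6 | h6
        · exact h6
        · exact absurd h6 (hfin _ _)
    refine le_antisymm ?_ zero_le
    calc ν {y | y < φ (h : G) y} ≤ ν (⋃ r : ℚ, Set.Ico ((φ (h : G)).symm (r : ℝ)) (r : ℝ)) :=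
          measure_mono hsub
    _ = 0 := measure_iUnion_null hz
  have M2 : ∀ h : ↥H, τ h = 0 → ν {y | φ (h : G) y < y} = 0 := by
    intro h h0
    have hset : {y | φ (h : G) y < y} = {y | y < φ ((h⁻¹ : ↥H) : G) y} := by
      ext y
      simp only [Set.mem_setOf_eq]
      have hc : ((h⁻¹ : ↥H) : G) = ((h : G))⁻¹ := rfl
      rw [hc]
      constructor
      · intro hy
        rw [phi_inv]
        have := (φ (h : G)).symm.strictMono hy
        rwa [OrderIso.symm_apply_apply] at this
      · intro hy
        rw [phi_inv] at hy
        have := (φ (h : G)).strictMono hy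
        rwa [OrderIso.apply_symm_apply] at this
    rw [hset]
    apply M1 h⁻¹
    rw [addhom_inv τ hτhom, h0]
    ring
  -- the set of points fixed by all of Kc
  set X : Set ℝ := {y | ∀ k ∈ Kc, φ k y = y} with hX
  have hXc : ν Xᶜ = 0 := by
    have hsub : Xᶜ ⊆ ⋃ k : ↥Kc, ({y | y < φ ((k : G)) y} ∪ {y | φ ((k : G)) y < y}) := by
      intro y hy
      simp only [hX, Set.mem_compl_iff, Set.mem_setOf_eq, not_forall] at hy
      obtain ⟨k, hk, hne⟩ := hy
      refine Set.mem_iUnion.mpr ⟨⟨k, hk⟩, ?_⟩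
      rcases lt_or_gt_of_ne hne with hlt | hgt
      · exact Or.inr hlt
      · exact Or.inl hgt
    have hz : ∀ k : ↥Kc, ν ({y | y < φ ((k : G)) y} ∪ {y | φ ((k : G)) y < y}) = 0 := by
      intro k
      obtain ⟨hkH, hk0⟩ := k.2
      have m1 := M1 ⟨(k : G), hkH⟩ hk0
      have m2 := M2 ⟨(k : G), hkH⟩ hk0
      refine le_antisymm ?_ zero_le
      calc ν _ ≤ ν {y | y < φ ((k : G)) y} + ν {y | φ ((k : G)) y < y} := measure_union_le _ _
      _ = 0 := by rw [m1, m2]; simp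
    refine le_antisymm ?_ zero_le
    calc ν Xᶜ ≤ ν (⋃ k : ↥Kc, ({y | y < φ ((k : G)) y} ∪ {y | φ ((k : G)) y < y})) :=
          measure_mono hsub
    _ = 0 := measure_iUnion_null hz
  have hXne : X.Nonempty := by
    by_contra hne
    rw [Set.not_nonempty_iff_eq_empty] at hne
    apply hν
    apply Measure.measure_univ_eq_zero.mp
    rw [← Set.compl_empty, ← hne]
    exact hXc
  have hXinv : ∀ (w : G) (y : ℝ), y ∈ X → φ w y ∈ X := by
    intro w y hy k hk
    obtain ⟨n, hn, _, hpow⟩ := Subgroup.exists_pow_mem_of_relIndex_ne_zero (comp2 w) hk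
    have hk' : w⁻¹ * k ^ n * w ∈ Kc :=
      (mem_conjMap Kc w (k ^ n)).mp (Subgroup.mem_inf.mp hpow).1
    have hfix : φ (w⁻¹ * k ^ n * w) y = y := hy _ hk'
    have hfix2 : φ (k ^ n) (φ w y) = φ w y := by
      calc φ (k ^ n) (φ w y) = φ (k ^ n * w) y := by rw [map_mul]; rfl
      _ = φ (w * (w⁻¹ * k ^ n * w)) y := by
          congr 1
          group
      _ = φ w (φ (w⁻¹ * k ^ n * w) y) := by rw [map_mul]; rfl
      _ = φ w y := by rw [hfix]
    have hfix3 : ((φ k) ^ n) (φ w y) = φ w y := by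
      rw [← map_pow]
      exact hfix2
    exact orderIso_fix_of_pow_fix (φ k) hn hfix3
  have hXclosed : IsClosed X := by
    have e : X = ⋂ k : ↥Kc, {y : ℝ | φ ((k : G)) y = y} := by
      ext y
      simp only [hX, Set.mem_setOf_eq, Set.mem_iInter, Subtype.forall]
    rw [e]
    exact isClosed_iInter fun k =>
      isClosed_eq (OrderIso.continuous (φ ((k : G)))) continuous_id
  have hXall : ∀ y : ℝ, y ∈ X := by
    obtain ⟨y₀, hy₀⟩ := hXne
    intro y
    have horb : {z : ℝ | ∃ w : G, φ w y₀ = z} ⊆ X := by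
      rintro z ⟨w, rfl⟩
      exact hXinv w y₀ hy₀
    have hclsub : closure {z : ℝ | ∃ w : G, φ w y₀ = z} ⊆ X :=
      hXclosed.closure_subset_iff.mpr horb
    exact hclsub ((hφ y₀) y)
  refine ⟨⟨κ, hκpos, hmul, fun g h hh hgh => hκ g h hh hgh⟩,
    ⟨Kc, hKmem, hcommK, fun k hk y => hXall y k hk⟩⟩
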